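/- Let Q ≥ 2 be an integer, let χ, μ ∈ ℝ satisfy 0 ≤ χ < 1 and μ < 2−χ, set ω = 1−χ and σ = (2−χ−μ)/(1−χ) > 0, and define u : ℝ^Q → ℝ by u(x) = exp((1+|x|²)^{σ/2}). Then there exist constants C > 0 and R₀ > 0 such that for every x ∈ ℝ^Q with |x| ≥ R₀, div(∇u/√(1+|∇u|²))(x) ≥ C (1+|x|)^{−μ} u(x)^{ω} |∇u(x)|^{χ} / √(1+|∇u(x)|²). In particular, u is an unbounded solution of the coercive inequality with borderline exponent ω = 1−χ on a superlevel set {u > γ} for γ large, showing that the strict inequality ω > 1−χ in the paper's Keller–Osserman type assumption is sharp. -/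

import Mathlib

open Set Filter Classical

noncomputable section

/-- The divergence of a vector field `V` on `ℝ^Q`: the sum of the partial derivatives
`∂ᵢ Vᵢ`. -/
def divg {Q : ℕ} (V : EuclideanSpace ℝ (Fin Q) → EuclideanSpace ℝ (Fin Q))
    (x : EuclideanSpace ℝ (Fin Q)) : ℝ :=
  ∑ i, fderiv ℝ V x (EuclideanSpace.single i 1) i

namespace S16

/-- h(t) : radial derivative factor, ∇u(x) = h(‖x‖²) • x. -/
def hfun (σ t : ℝ) : ℝ := σ * (1 + t) ^ (σ / 2 - 1) * Real.exp ((1 + t) ^ (σ / 2))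

/-- Derivative of `hfun σ` (clean factored form). -/
def hfun' (σ t : ℝ) : ℝ :=
  σ * Real.exp ((1 + t) ^ (σ / 2)) * (1 + t) ^ (σ / 2 - 2) *
    ((σ / 2 - 1) + σ / 2 * (1 + t) ^ (σ / 2))

lemma hasDerivAt_hfun (σ t : ℝ) (ht : 0 ≤ t) : HasDerivAt (hfun σ) (hfun' σ t) t := by
  have hpos : (0:ℝ) < 1 + t := by linarith
  have h1 : HasDerivAt (fun s : ℝ => 1 + s) 1 t := by
    simpa using (hasDerivAt_id t).const_add (1:ℝ)
  have hr1 : HasDerivAt (fun s : ℝ => σ * (1 + s) ^ (σ / 2 - 1))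
      (σ * (1 * (σ / 2 - 1) * (1 + t) ^ (σ / 2 - 1 - 1))) t :=
    (h1.rpow_const (Or.inl hpos.ne')).const_mul σ
  have hr2 : HasDerivAt (fun s : ℝ => Real.exp ((1 + s) ^ (σ / 2)))
      (Real.exp ((1 + t) ^ (σ / 2)) * (1 * (σ / 2) * (1 + t) ^ (σ / 2 - 1))) t :=
    (h1.rpow_const (Or.inl hpos.ne')).exp
  have := hr1.mul hr2
  unfold hfun hfun'
  refine this.congr_deriv ?_
  symm
  rw [show σ / 2 - 1 - 1 = σ / 2 - 2 by ring]
  have e1 : (1 + t) ^ (σ / 2 - 1) * (1 + t) ^ (σ / 2 - 1)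
      = (1 + t) ^ (σ / 2 - 2) * (1 + t) ^ (σ / 2) := by
    rw [← Real.rpow_add hpos, ← Real.rpow_add hpos]; ring_nf
  linear_combination (-(σ * (σ / 2)) * Real.exp ((1 + t) ^ (σ / 2))) * e1


/-- φ(t) = h(t)/√(1+t h(t)²); the field is V(y) = φ(‖y‖²) • y. -/
def phi (σ t : ℝ) : ℝ := hfun σ t / Real.sqrt (1 + t * hfun σ t ^ 2)

def phi' (σ t : ℝ) : ℝ :=
  (hfun' σ t * Real.sqrt (1 + t * hfun σ t ^ 2) -
      hfun σ t * ((1 * hfun σ t ^ 2 + t * (2 * hfun σ t ^ 1 * hfun' σ t)) /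
        (2 * Real.sqrt (1 + t * hfun σ t ^ 2)))) /
    Real.sqrt (1 + t * hfun σ t ^ 2) ^ 2

lemma sqrt_pos_aux (σ t : ℝ) (ht : 0 ≤ t) : 0 < Real.sqrt (1 + t * hfun σ t ^ 2) :=
  Real.sqrt_pos.2 (by positivity)

lemma hasDerivAt_phi (σ t : ℝ) (ht : 0 ≤ t) : HasDerivAt (phi σ) (phi' σ t) t := by
  have hh := hasDerivAt_hfun σ t ht
  have hin : HasDerivAt (fun s : ℝ => 1 + s * hfun σ s ^ 2)
      (1 * hfun σ t ^ 2 + t * (2 * hfun σ t ^ 1 * hfun' σ t)) t := by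
    simpa using ((hasDerivAt_id t).mul (hh.pow 2)).const_add (1:ℝ)
  have hne : (1 + t * hfun σ t ^ 2) ≠ 0 := by positivity
  have hS := hin.sqrt hne
  have hSne : Real.sqrt (1 + t * hfun σ t ^ 2) ≠ 0 := (sqrt_pos_aux σ t ht).ne'
  exact hh.div hS hSne


variable {Q : ℕ}

lemma hasGradientAt_u (σ : ℝ) (x : EuclideanSpace ℝ (Fin Q)) :
    HasGradientAt (fun y : EuclideanSpace ℝ (Fin Q) => Real.exp ((1 + ‖y‖ ^ 2) ^ (σ / 2)))
      (hfun σ (‖x‖ ^ 2) • x) x := by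
  have hpos : (0:ℝ) < 1 + ‖x‖ ^ 2 := by positivity
  have h1 : HasDerivAt (fun s : ℝ => 1 + s) 1 (‖x‖ ^ 2) := by
    simpa using (hasDerivAt_id (‖x‖ ^ 2)).const_add (1:ℝ)
  have hG : HasDerivAt (fun s : ℝ => Real.exp ((1 + s) ^ (σ / 2)))
      (Real.exp ((1 + ‖x‖ ^ 2) ^ (σ / 2)) * (1 * (σ / 2) * (1 + ‖x‖ ^ 2) ^ (σ / 2 - 1)))
      (‖x‖ ^ 2) := (h1.rpow_const (Or.inl hpos.ne')).exp
  have hsq : HasFDerivAt (fun y : EuclideanSpace ℝ (Fin Q) => ‖y‖ ^ 2)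
      (2 • (innerSL ℝ x)) x := (hasStrictFDerivAt_norm_sq x).hasFDerivAt
  have hcomp := hG.comp_hasFDerivAt x hsq
  rw [hasGradientAt_iff_hasFDerivAt]
  refine hcomp.congr_fderiv ?_
  ext v
  simp only [InnerProductSpace.toDual_apply_apply, ContinuousLinearMap.smul_apply,
    ContinuousLinearMap.smul_apply, innerSL_apply_apply, real_inner_smul_left, smul_eq_mul]
  rw [hfun]
  ring

lemma gradient_u (σ : ℝ) (x : EuclideanSpace ℝ (Fin Q)) :
    gradient (fun y : EuclideanSpace ℝ (Fin Q) => Real.exp ((1 + ‖y‖ ^ 2) ^ (σ / 2))) x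
      = hfun σ (‖x‖ ^ 2) • x := (hasGradientAt_u σ x).gradient


lemma V_eq (σ : ℝ) (hσ : 0 < σ) :
    (fun y : EuclideanSpace ℝ (Fin Q) =>
      (Real.sqrt (1 + ‖gradient (fun z : EuclideanSpace ℝ (Fin Q) =>
        Real.exp ((1 + ‖z‖ ^ 2) ^ (σ / 2))) y‖ ^ 2))⁻¹
      • gradient (fun z : EuclideanSpace ℝ (Fin Q) =>
        Real.exp ((1 + ‖z‖ ^ 2) ^ (σ / 2))) y)
    = fun y : EuclideanSpace ℝ (Fin Q) => phi σ (‖y‖ ^ 2) • y := by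
  funext y
  rw [gradient_u, phi, smul_smul]
  congr 1
  have hnn : 0 ≤ hfun σ (‖y‖ ^ 2) := by
    rw [hfun]; positivity
  rw [norm_smul, mul_pow, Real.norm_eq_abs, sq_abs, div_eq_inv_mul]
  ring_nf

lemma hasFDerivAt_V (σ : ℝ) (x : EuclideanSpace ℝ (Fin Q)) :
    HasFDerivAt (fun y : EuclideanSpace ℝ (Fin Q) => phi σ (‖y‖ ^ 2) • y)
      (phi σ (‖x‖ ^ 2) • ContinuousLinearMap.id ℝ (EuclideanSpace ℝ (Fin Q)) +
        (phi' σ (‖x‖ ^ 2) • (2 • (innerSL ℝ x))).smulRight x) x := by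
  have hφ := hasDerivAt_phi σ (‖x‖ ^ 2) (by positivity)
  have hsq : HasFDerivAt (fun y : EuclideanSpace ℝ (Fin Q) => ‖y‖ ^ 2)
      (2 • (innerSL ℝ x)) x := (hasStrictFDerivAt_norm_sq x).hasFDerivAt
  have hc : HasFDerivAt (fun y : EuclideanSpace ℝ (Fin Q) => phi σ (‖y‖ ^ 2))
      (phi' σ (‖x‖ ^ 2) • (2 • (innerSL ℝ x))) x := by
    have := hφ.comp_hasFDerivAt x hsq; exact this
  exact hc.smul (hasFDerivAt_id x)

lemma divg_eq (σ : ℝ) (x : EuclideanSpace ℝ (Fin Q)) :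
    divg (fun y : EuclideanSpace ℝ (Fin Q) => phi σ (‖y‖ ^ 2) • y) x
      = Q * phi σ (‖x‖ ^ 2) + 2 * ‖x‖ ^ 2 * phi' σ (‖x‖ ^ 2) := by
  rw [divg, (hasFDerivAt_V σ x).fderiv]
  have : ∀ i : Fin Q,
      ((phi σ (‖x‖ ^ 2) • ContinuousLinearMap.id ℝ (EuclideanSpace ℝ (Fin Q)) +
        (phi' σ (‖x‖ ^ 2) • (2 • (innerSL ℝ x))).smulRight x) (EuclideanSpace.single i 1)) i
      = phi σ (‖x‖ ^ 2) + phi' σ (‖x‖ ^ 2) * (2 * x i) * x i := by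
    intro i
    simp [ContinuousLinearMap.add_apply, ContinuousLinearMap.smul_apply,
      ContinuousLinearMap.smulRight_apply, innerSL_apply_apply, PiLp.add_apply,
      PiLp.smul_apply, EuclideanSpace.single_apply, EuclideanSpace.inner_single_right,
      smul_eq_mul]
  rw [Finset.sum_congr rfl (fun i _ => this i), Finset.sum_add_distrib,
    Finset.sum_const, Finset.card_univ, Fintype.card_fin]
  have hx2 : ∑ i, x i * x i = ‖x‖ ^ 2 := by
    have := real_inner_self_eq_norm_sq x
    rw [PiLp.inner_apply] at this
    simpa [sq] using this
  have h2 : ∑ i, phi' σ (‖x‖ ^ 2) * (2 * x i) * x i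
      = (2 * phi' σ (‖x‖ ^ 2)) * ∑ i, x i * x i := by
    rw [Finset.mul_sum]; exact Finset.sum_congr rfl fun i _ => by ring
  rw [h2, hx2, nsmul_eq_mul]
  ring


lemma hfun_pos (σ t : ℝ) (hσ : 0 < σ) (ht : 0 ≤ t) : 0 < hfun σ t := by
  rw [hfun]
  have h1 : (0:ℝ) < 1 + t := by linarith
  positivity

lemma phi'_eq (σ t : ℝ) (ht : 0 ≤ t) :
    phi' σ t = (2 * hfun' σ t - hfun σ t ^ 3) /
      (2 * Real.sqrt (1 + t * hfun σ t ^ 2) ^ 3) := by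
  set h := hfun σ t
  set h' := hfun' σ t
  set S := Real.sqrt (1 + t * h ^ 2) with hSdef
  have hS : 0 < S := sqrt_pos_aux σ t ht
  have hS2 : S ^ 2 = 1 + t * h ^ 2 := Real.sq_sqrt (by positivity)
  rw [phi']
  have hN : h' * S - h * ((1 * h ^ 2 + t * (2 * h ^ 1 * h')) / (2 * S))
      = (2 * h' - h ^ 3) / (2 * S) := by
    field_simp
    linear_combination (2 * h') * hS2
  rw [hN, div_div]
  congr 1
  ring

lemma divg_ge (σ : ℝ) (hσ : 0 < σ) (hQ : 2 ≤ Q) (x : EuclideanSpace ℝ (Fin Q))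
    (hd : 0 ≤ hfun' σ (‖x‖ ^ 2)) :
    ((Q : ℝ) - 1) * hfun σ (‖x‖ ^ 2) / Real.sqrt (1 + ‖x‖ ^ 2 * hfun σ (‖x‖ ^ 2) ^ 2)
      ≤ divg (fun y : EuclideanSpace ℝ (Fin Q) => phi σ (‖y‖ ^ 2) • y) x := by
  have ht : (0:ℝ) ≤ ‖x‖ ^ 2 := by positivity
  rw [divg_eq, phi, phi'_eq σ _ ht]
  set t := ‖x‖ ^ 2
  set h := hfun σ t
  set h' := hfun' σ t
  set S := Real.sqrt (1 + t * h ^ 2) with hSdef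
  have hS : 0 < S := sqrt_pos_aux σ t ht
  have hS2 : S ^ 2 = 1 + t * h ^ 2 := Real.sq_sqrt (by positivity)
  have hh : 0 < h := hfun_pos σ t hσ ht
  have key : (Q : ℝ) * (h / S) + 2 * t * ((2 * h' - h ^ 3) / (2 * S ^ 3))
      - ((Q : ℝ) - 1) * h / S = (h + 2 * t * h') / S ^ 3 := by
    field_simp
    linear_combination h * hS2
  have hnn : 0 ≤ (h + 2 * t * h') / S ^ 3 := by positivity
  linarith [key]


lemma hfun'_nonneg (σ t : ℝ) (hσ : 0 < σ) (ht : 0 ≤ t)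
    (hbig : 2 / σ ≤ (1 + t) ^ (σ / 2)) : 0 ≤ hfun' σ t := by
  rw [hfun']
  have h1 : (0:ℝ) < 1 + t := by linarith
  have hin : 0 ≤ (σ / 2 - 1) + σ / 2 * (1 + t) ^ (σ / 2) := by
    have h2 : σ / 2 * (2 / σ) ≤ σ / 2 * (1 + t) ^ (σ / 2) :=
      mul_le_mul_of_nonneg_left hbig (by positivity)
    have h3 : σ / 2 * (2 / σ) = 1 := by field_simp
    linarith
  positivity

lemma core (χ μ e r : ℝ) (hχ0 : 0 ≤ χ) (he : e = (χ - μ) / 2) (hr : 0 ≤ r) :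
    min 1 ((2:ℝ) ^ (-e)) * ((1 + r) ^ (-μ) * r ^ χ) ≤ (1 + r ^ 2) ^ e := by
  have h1r : (0:ℝ) < 1 + r := by linarith
  have hc0 : 0 < min 1 ((2:ℝ) ^ (-e)) := lt_min one_pos (Real.rpow_pos_of_pos two_pos _)
  have hbase1 : (0:ℝ) < 1 + r ^ 2 := by positivity
  have step1 : (1 + r) ^ (-μ) * r ^ χ ≤ (1 + r) ^ (2 * e) := by
    have h0 : r ^ χ ≤ (1 + r) ^ χ := Real.rpow_le_rpow hr (by linarith) hχ0
    calc (1 + r) ^ (-μ) * r ^ χ ≤ (1 + r) ^ (-μ) * (1 + r) ^ χ :=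
          mul_le_mul_of_nonneg_left h0 (Real.rpow_nonneg h1r.le _)
      _ = (1 + r) ^ (2 * e) := by
          rw [← Real.rpow_add h1r, he]; ring_nf
  have step2 : (1 + r) ^ (2 * e) = ((1 + r) ^ 2) ^ e := by
    rw [← Real.rpow_natCast (1 + r) 2, ← Real.rpow_mul h1r.le]
    norm_num
  have step3 : min 1 ((2:ℝ) ^ (-e)) * ((1 + r) ^ 2) ^ e ≤ (1 + r ^ 2) ^ e := by
    rcases le_or_gt 0 e with he0 | he0
    · have hb2 : (1 + r) ^ 2 ≤ 2 * (1 + r ^ 2) := by nlinarith [sq_nonneg (1 - r)]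
      have hle : ((1 + r) ^ 2) ^ e ≤ (2 * (1 + r ^ 2)) ^ e :=
        Real.rpow_le_rpow (by positivity) hb2 he0
      have hmul : (2 * (1 + r ^ 2)) ^ e = 2 ^ e * (1 + r ^ 2) ^ e :=
        Real.mul_rpow (by norm_num) hbase1.le
      calc min 1 ((2:ℝ) ^ (-e)) * ((1 + r) ^ 2) ^ e
          ≤ (2:ℝ) ^ (-e) * (2 ^ e * (1 + r ^ 2) ^ e) :=
            mul_le_mul (min_le_right _ _) (hle.trans_eq hmul)
              (Real.rpow_nonneg (by positivity) _) (Real.rpow_nonneg (by norm_num) _)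
        _ = (1 + r ^ 2) ^ e := by
            rw [← mul_assoc, ← Real.rpow_add two_pos]; norm_num
    · have hble : 1 + r ^ 2 ≤ (1 + r) ^ 2 := by nlinarith
      have hle : ((1 + r) ^ 2) ^ e ≤ (1 + r ^ 2) ^ e :=
        Real.rpow_le_rpow_of_nonpos hbase1 hble he0.le
      calc min 1 ((2:ℝ) ^ (-e)) * ((1 + r) ^ 2) ^ e
          ≤ 1 * ((1 + r) ^ 2) ^ e :=
            mul_le_mul_of_nonneg_right (min_le_left _ _) (Real.rpow_nonneg (by positivity) _)
        _ ≤ (1 + r ^ 2) ^ e := by rw [one_mul]; exact hle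
  calc min 1 ((2:ℝ) ^ (-e)) * ((1 + r) ^ (-μ) * r ^ χ)
      ≤ min 1 ((2:ℝ) ^ (-e)) * (1 + r) ^ (2 * e) :=
        mul_le_mul_of_nonneg_left step1 hc0.le
    _ = min 1 ((2:ℝ) ^ (-e)) * ((1 + r) ^ 2) ^ e := by rw [step2]
    _ ≤ (1 + r ^ 2) ^ e := step3

end S16

open S16 in
/-- Sharpness of the strict inequality `ω > 1−χ`: with `ω = 1−χ` and
`σ = (2−χ−μ)/(1−χ)`, the exponential function `u(x) = exp((1+|x|²)^{σ/2})` satisfies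
`div(∇u/√(1+|∇u|²)) ≥ C(1+|x|)^{−μ} u^{1−χ} |∇u|^χ/√(1+|∇u|²)` for `|x|` large. -/
theorem statement16 (Q : ℕ) (hQ : 2 ≤ Q) (χ μ : ℝ)
    (hχ0 : 0 ≤ χ) (hχ1 : χ < 1) (hμ : μ < 2 - χ) :
    ∃ C R₀ : ℝ, 0 < C ∧ 0 < R₀ ∧ ∀ x : EuclideanSpace ℝ (Fin Q), R₀ ≤ ‖x‖ →
      C * (1 + ‖x‖) ^ (-μ) *
        (Real.exp ((1 + ‖x‖ ^ 2) ^ (((2 - χ - μ) / (1 - χ)) / 2))) ^ (1 - χ) *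
        ‖gradient (fun y : EuclideanSpace ℝ (Fin Q) =>
          Real.exp ((1 + ‖y‖ ^ 2) ^ (((2 - χ - μ) / (1 - χ)) / 2))) x‖ ^ χ /
        Real.sqrt (1 + ‖gradient (fun y : EuclideanSpace ℝ (Fin Q) =>
          Real.exp ((1 + ‖y‖ ^ 2) ^ (((2 - χ - μ) / (1 - χ)) / 2))) x‖ ^ 2)
      ≤ divg (fun y : EuclideanSpace ℝ (Fin Q) =>
          (Real.sqrt (1 + ‖gradient (fun z : EuclideanSpace ℝ (Fin Q) =>
            Real.exp ((1 + ‖z‖ ^ 2) ^ (((2 - χ - μ) / (1 - χ)) / 2))) y‖ ^ 2))⁻¹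
          • gradient (fun z : EuclideanSpace ℝ (Fin Q) =>
            Real.exp ((1 + ‖z‖ ^ 2) ^ (((2 - χ - μ) / (1 - χ)) / 2))) y) x := by
  set σ := (2 - χ - μ) / (1 - χ) with hσdef
  have hχ : (0:ℝ) < 1 - χ := by linarith
  have hnum : (0:ℝ) < 2 - χ - μ := by linarith
  have hσ : 0 < σ := div_pos hnum hχ
  have hσχ : σ * (1 - χ) = 2 - χ - μ := by
    rw [hσdef]; field_simp
  set e := (χ - μ) / 2 with hedef
  have hexp : (σ / 2 - 1) * (1 - χ) = e := by
    rw [hedef]; linear_combination hσχ / 2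
  set c0 := min 1 ((2:ℝ) ^ (-e)) with hc0def
  have hc0 : 0 < c0 := lt_min one_pos (Real.rpow_pos_of_pos two_pos _)
  have hQ1 : (1:ℝ) ≤ (Q:ℝ) - 1 := by
    have : (2:ℝ) ≤ (Q:ℝ) := by exact_mod_cast hQ
    linarith
  -- choose R₀ so that (1+t)^(σ/2) ≥ 2/σ for t ≥ R₀²
  have htend : Tendsto (fun t : ℝ => (1 + t) ^ (σ / 2)) atTop atTop :=
    (tendsto_rpow_atTop (by positivity)).comp
      (tendsto_atTop_add_const_left atTop 1 tendsto_id)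
  obtain ⟨T, hT⟩ := eventually_atTop.mp (htend.eventually_ge_atTop (2 / σ))
  refine ⟨((Q:ℝ) - 1) * σ ^ (1 - χ) * c0, max 1 |T|, ?_, ?_, ?_⟩
  · have h1 : (0:ℝ) < σ ^ (1 - χ) := Real.rpow_pos_of_pos hσ _
    exact mul_pos (mul_pos (by linarith) h1) hc0
  · exact lt_of_lt_of_le one_pos (le_max_left _ _)
  · intro x hx
    set r := ‖x‖ with hrdef
    have hr0 : 0 ≤ r := norm_nonneg x
    have hr1 : 1 ≤ r := le_trans (le_max_left _ _) hx
    have hrT : |T| ≤ r := le_trans (le_max_right _ _) hx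
    have htT : T ≤ r ^ 2 := by nlinarith [le_abs_self T]
    have hbig : 2 / σ ≤ (1 + r ^ 2) ^ (σ / 2) := hT _ htT
    have ht : (0:ℝ) ≤ r ^ 2 := by positivity
    have hd : 0 ≤ hfun' σ (r ^ 2) := hfun'_nonneg σ _ hσ ht hbig
    have hh : 0 < hfun σ (r ^ 2) := hfun_pos σ _ hσ ht
    rw [V_eq σ hσ, gradient_u σ x]
    have hnorm : ‖hfun σ (‖x‖ ^ 2) • x‖ = hfun σ (r ^ 2) * r := by
      rw [norm_smul, Real.norm_eq_abs, abs_of_pos hh]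
    rw [hnorm]
    have hsq : 1 + (hfun σ (r ^ 2) * r) ^ 2 = 1 + r ^ 2 * hfun σ (r ^ 2) ^ 2 := by ring
    rw [hsq]
    refine le_trans ?_ (divg_ge σ hσ hQ x hd)
    have hS : 0 < Real.sqrt (1 + r ^ 2 * hfun σ (r ^ 2) ^ 2) := sqrt_pos_aux σ _ ht
    rw [div_le_div_iff_of_pos_right hS]  -- name guess, fix if needed
    -- numerator inequality
    set h := hfun σ (r ^ 2) with hhdef
    set Eexp := Real.exp ((1 + r ^ 2) ^ (σ / 2)) with hEdef
    have hE : 0 < Eexp := Real.exp_pos _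
    have hmulr : (h * r) ^ χ = h ^ χ * r ^ χ := Real.mul_rpow hh.le hr0
    have hsplit : h = h ^ (1 - χ) * h ^ χ := by
      rw [← Real.rpow_add hh, show (1 - χ) + χ = (1:ℝ) by ring, Real.rpow_one]
    have h1t : (0:ℝ) < 1 + r ^ 2 := by positivity
    have hpow : h ^ (1 - χ) = σ ^ (1 - χ) * (1 + r ^ 2) ^ e * Eexp ^ (1 - χ) := by
      rw [hhdef, hfun, Real.mul_rpow (by positivity) (Real.exp_pos _).le,
        Real.mul_rpow hσ.le (Real.rpow_nonneg h1t.le _),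
        ← Real.rpow_mul h1t.le, hexp]
    have hEχ : (0:ℝ) ≤ Eexp ^ (1 - χ) := Real.rpow_nonneg hE.le _
    have hhχ : (0:ℝ) ≤ h ^ χ := Real.rpow_nonneg hh.le _
    have hσχ' : (0:ℝ) ≤ σ ^ (1 - χ) := Real.rpow_nonneg hσ.le _
    calc ((Q:ℝ) - 1) * σ ^ (1 - χ) * c0 * (1 + r) ^ (-μ) * Eexp ^ (1 - χ) * (h * r) ^ χ
        = (((Q:ℝ) - 1) * σ ^ (1 - χ) * Eexp ^ (1 - χ) * h ^ χ) *
            (c0 * ((1 + r) ^ (-μ) * r ^ χ)) := by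
          rw [hmulr]; ring
      _ ≤ (((Q:ℝ) - 1) * σ ^ (1 - χ) * Eexp ^ (1 - χ) * h ^ χ) * (1 + r ^ 2) ^ e := by
          refine mul_le_mul_of_nonneg_left (core χ μ e r hχ0 hedef hr0) ?_
          have : (0:ℝ) ≤ (Q:ℝ) - 1 := by linarith
          positivity
      _ = ((Q:ℝ) - 1) * h := by
          conv_rhs => rw [hsplit]
          rw [hpow]; ring
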